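/- Let R be the 3×3 rotationally symmetric matrix with parameters r1, r2 satisfying r1 + r2 < 2. Then R is completely-S (equivalently, 1 + r1 + r2 > 0) if and only if R is a P-matrix (equivalently, 1 - r1·r2 > 0 and 1 + r1³ + r2³ - 3·r1·r2 > 0). -/

import Mathlib

open Matrix

section Aux

def eS0 : Fin 1 ≃ ({0} : Finset (Fin 3)) where
  toFun _ := ⟨0, by decide⟩
  invFun _ := 0
  left_inv := by decide
  right_inv := by decide

def eS1 : Fin 1 ≃ ({1} : Finset (Fin 3)) where
  toFun _ := ⟨1, by decide⟩
  invFun _ := 0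
  left_inv := by decide
  right_inv := by decide

def eS2 : Fin 1 ≃ ({2} : Finset (Fin 3)) where
  toFun _ := ⟨2, by decide⟩
  invFun _ := 0
  left_inv := by decide
  right_inv := by decide

def eP01 : Fin 2 ≃ ({0,1} : Finset (Fin 3)) where
  toFun i := ⟨![0,1] i, by fin_cases i <;> decide⟩
  invFun x := if (x : Fin 3) = 0 then 0 else 1
  left_inv := by decide
  right_inv := by decide

def eP02 : Fin 2 ≃ ({0,2} : Finset (Fin 3)) where
  toFun i := ⟨![0,2] i, by fin_cases i <;> decide⟩
  invFun x := if (x : Fin 3) = 0 then 0 else 1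
  left_inv := by decide
  right_inv := by decide

def eP12 : Fin 2 ≃ ({1,2} : Finset (Fin 3)) where
  toFun i := ⟨![1,2] i, by fin_cases i <;> decide⟩
  invFun x := if (x : Fin 3) = 1 then 0 else 1
  left_inv := by decide
  right_inv := by decide

def eF : Fin 3 ≃ ({0,1,2} : Finset (Fin 3)) where
  toFun i := ⟨i, by fin_cases i <;> decide⟩
  invFun x := (x : Fin 3)
  left_inv := by decide
  right_inv := by decide

lemma dS0 (M : Matrix (Fin 3) (Fin 3) ℝ) :
    (M.submatrix (fun i : ({0} : Finset (Fin 3)) => (i : Fin 3))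
      (fun j : ({0} : Finset (Fin 3)) => (j : Fin 3))).det = M 0 0 := by
  rw [← Matrix.det_submatrix_equiv_self eS0, Matrix.det_fin_one]; rfl

lemma dS1 (M : Matrix (Fin 3) (Fin 3) ℝ) :
    (M.submatrix (fun i : ({1} : Finset (Fin 3)) => (i : Fin 3))
      (fun j : ({1} : Finset (Fin 3)) => (j : Fin 3))).det = M 1 1 := by
  rw [← Matrix.det_submatrix_equiv_self eS1, Matrix.det_fin_one]; rfl

lemma dS2 (M : Matrix (Fin 3) (Fin 3) ℝ) :
    (M.submatrix (fun i : ({2} : Finset (Fin 3)) => (i : Fin 3))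
      (fun j : ({2} : Finset (Fin 3)) => (j : Fin 3))).det = M 2 2 := by
  rw [← Matrix.det_submatrix_equiv_self eS2, Matrix.det_fin_one]; rfl

lemma dP01 (M : Matrix (Fin 3) (Fin 3) ℝ) :
    (M.submatrix (fun i : ({0,1} : Finset (Fin 3)) => (i : Fin 3))
      (fun j : ({0,1} : Finset (Fin 3)) => (j : Fin 3))).det
      = M 0 0 * M 1 1 - M 0 1 * M 1 0 := by
  rw [← Matrix.det_submatrix_equiv_self eP01, Matrix.det_fin_two]; rfl

lemma dP02 (M : Matrix (Fin 3) (Fin 3) ℝ) :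
    (M.submatrix (fun i : ({0,2} : Finset (Fin 3)) => (i : Fin 3))
      (fun j : ({0,2} : Finset (Fin 3)) => (j : Fin 3))).det
      = M 0 0 * M 2 2 - M 0 2 * M 2 0 := by
  rw [← Matrix.det_submatrix_equiv_self eP02, Matrix.det_fin_two]; rfl

lemma dP12 (M : Matrix (Fin 3) (Fin 3) ℝ) :
    (M.submatrix (fun i : ({1,2} : Finset (Fin 3)) => (i : Fin 3))
      (fun j : ({1,2} : Finset (Fin 3)) => (j : Fin 3))).det
      = M 1 1 * M 2 2 - M 1 2 * M 2 1 := by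
  rw [← Matrix.det_submatrix_equiv_self eP12, Matrix.det_fin_two]; rfl

lemma dF (M : Matrix (Fin 3) (Fin 3) ℝ) :
    (M.submatrix (fun i : ({0,1,2} : Finset (Fin 3)) => (i : Fin 3))
      (fun j : ({0,1,2} : Finset (Fin 3)) => (j : Fin 3))).det
      = M 0 0 * (M 1 1 * M 2 2 - M 1 2 * M 2 1)
        - M 0 1 * (M 1 0 * M 2 2 - M 1 2 * M 2 0)
        + M 0 2 * (M 1 0 * M 2 1 - M 1 1 * M 2 0) := by
  rw [← Matrix.det_submatrix_equiv_self eF, Matrix.det_fin_three]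
  show M 0 0 * M 1 1 * M 2 2 - M 0 0 * M 1 2 * M 2 1 - M 0 1 * M 1 0 * M 2 2
    + M 0 1 * M 1 2 * M 2 0 + M 0 2 * M 1 0 * M 2 1 - M 0 2 * M 1 1 * M 2 0 = _
  ring

lemma enum3 : ∀ s : Finset (Fin 3), s.Nonempty →
    s = {0} ∨ s = {1} ∨ s = {2} ∨ s = {0,1} ∨ s = {0,2} ∨ s = {1,2} ∨ s = {0,1,2} := by
  decide

lemma pairS (a b : ℝ) (h : 0 < 1 + a + b) :
    ∃ x y : ℝ, 0 < x ∧ 0 < y ∧ 0 < x + a * y ∧ 0 < b * x + y := by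
  rcases le_or_gt 0 b with hb | hb
  · refine ⟨max 1 (1 - a), 1, lt_of_lt_of_le one_pos (le_max_left _ _), one_pos, ?_, ?_⟩
    · nlinarith [le_max_right 1 (1 - a)]
    · nlinarith [le_max_left 1 (1 - a), mul_nonneg hb (le_trans zero_le_one (le_max_left 1 (1 - a)))]
  · rcases le_or_gt 0 a with ha | ha
    · refine ⟨1, max 1 (1 - b), one_pos, lt_of_lt_of_le one_pos (le_max_left _ _), ?_, ?_⟩
      · nlinarith [mul_nonneg ha (le_trans zero_le_one (le_max_left 1 (1 - b)))]
      · nlinarith [le_max_right 1 (1 - b)]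
    · exact ⟨1, 1, one_pos, one_pos, by nlinarith, by nlinarith⟩

end Aux

/-- `R` is completely-S: every principal submatrix is an S-matrix. -/
def CompletelyS {n : ℕ} (R : Matrix (Fin n) (Fin n) ℝ) : Prop :=
  ∀ s : Finset (Fin n), s.Nonempty →
    ∃ u : Fin n → ℝ, (∀ i ∈ s, 0 < u i) ∧ (∀ i ∈ s, 0 < ∑ j ∈ s, R i j * u j)

/-- `R` is a P-matrix: every principal minor is positive. -/
def IsPMatrix {n : ℕ} (R : Matrix (Fin n) (Fin n) ℝ) : Prop :=
  ∀ s : Finset (Fin n), s.Nonempty →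
    0 < (R.submatrix (fun i : s => (i : Fin n)) (fun j : s => (j : Fin n))).det

theorem stmt_3 (r1 r2 : ℝ)
    (R : Matrix (Fin 3) (Fin 3) ℝ)
    (hR : R = !![1, r2, r1; r1, 1, r2; r2, r1, 1])
    (hstab : r1 + r2 < 2) :
    CompletelyS R ↔ IsPMatrix R := by
  subst hR
  set M : Matrix (Fin 3) (Fin 3) ℝ := !![1, r2, r1; r1, 1, r2; r2, r1, 1] with hM
  have hM00 : M 0 0 = 1 := rfl
  have hM01 : M 0 1 = r2 := rfl
  have hM02 : M 0 2 = r1 := rfl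
  have hM10 : M 1 0 = r1 := rfl
  have hM11 : M 1 1 = 1 := rfl
  have hM12 : M 1 2 = r2 := rfl
  have hM20 : M 2 0 = r2 := rfl
  have hM21 : M 2 1 = r1 := rfl
  have hM22 : M 2 2 = 1 := rfl
  constructor
  · -- CompletelyS → IsPMatrix
    intro hcs
    -- first extract 0 < 1 + r1 + r2 from the full set
    obtain ⟨u, hu, hsum⟩ := hcs Finset.univ ⟨0, Finset.mem_univ 0⟩
    have hu0 := hu 0 (Finset.mem_univ _)
    have hu1 := hu 1 (Finset.mem_univ _)
    have hu2 := hu 2 (Finset.mem_univ _)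
    have h0 := hsum 0 (Finset.mem_univ _)
    have h1 := hsum 1 (Finset.mem_univ _)
    have h2 := hsum 2 (Finset.mem_univ _)
    rw [Fin.sum_univ_three] at h0 h1 h2
    rw [hM00, hM01, hM02] at h0
    rw [hM10, hM11, hM12] at h1
    rw [hM20, hM21, hM22] at h2
    have hs : 0 < 1 + r1 + r2 := by
      by_contra hc
      push_neg at hc
      nlinarith [mul_nonneg (by linarith : (0:ℝ) ≤ -(1 + r1 + r2))
        (by linarith : (0:ℝ) ≤ u 0 + u 1 + u 2)]
    have hq : 0 < 1 - r1 * r2 := by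
      nlinarith [mul_pos (by linarith : (0:ℝ) < 2 - (r1 + r2)) hs, sq_nonneg (r1 - r2)]
    have hQ : 0 < 1 + r1 ^ 2 + r2 ^ 2 - r1 - r2 - r1 * r2 := by
      nlinarith [sq_nonneg (2 - r1 - r2), sq_nonneg (r1 - r2)]
    intro s hsne
    rcases enum3 s hsne with h | h | h | h | h | h | h <;> subst h
    · rw [dS0, hM00]; norm_num
    · rw [dS1, hM11]; norm_num
    · rw [dS2, hM22]; norm_num
    · rw [dP01, hM00, hM11, hM01, hM10]; nlinarith
    · rw [dP02, hM00, hM22, hM02, hM20]; nlinarith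
    · rw [dP12, hM11, hM22, hM12, hM21]; nlinarith
    · rw [dF, hM00, hM01, hM02, hM10, hM11, hM12, hM20, hM21, hM22]
      nlinarith [mul_pos hs hQ]
  · -- IsPMatrix → CompletelyS
    intro hp
    have hdet := hp {0,1,2} ⟨0, by decide⟩
    rw [dF, hM00, hM01, hM02, hM10, hM11, hM12, hM20, hM21, hM22] at hdet
    have hQ : 0 < 1 + r1 ^ 2 + r2 ^ 2 - r1 - r2 - r1 * r2 := by
      nlinarith [sq_nonneg (2 - r1 - r2), sq_nonneg (r1 - r2)]
    have hs : 0 < 1 + r1 + r2 := by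
      by_contra hc
      push_neg at hc
      nlinarith [mul_nonneg (le_of_lt hQ) (by linarith : (0:ℝ) ≤ -(1 + r1 + r2))]
    intro s hsne
    rcases enum3 s hsne with h | h | h | h | h | h | h <;> subst h
    · exact ⟨fun _ => 1, fun i _ => one_pos, by
        intro i hi
        rw [Finset.mem_singleton] at hi
        subst hi
        rw [Finset.sum_singleton, hM00]
        norm_num⟩
    · exact ⟨fun _ => 1, fun i _ => one_pos, by
        intro i hi
        rw [Finset.mem_singleton] at hi
        subst hi
        rw [Finset.sum_singleton, hM11]
        norm_num⟩
    · exact ⟨fun _ => 1, fun i _ => one_pos, by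
        intro i hi
        rw [Finset.mem_singleton] at hi
        subst hi
        rw [Finset.sum_singleton, hM22]
        norm_num⟩
    · -- {0,1} : rows give (1, r2; r1, 1)
      obtain ⟨x, y, hx, hy, hxy1, hxy2⟩ := pairS r2 r1 (by linarith)
      refine ⟨![x, y, 1], ?_, ?_⟩
      · intro i hi; fin_cases hi <;> simpa using by assumption
      · intro i hi
        fin_cases hi <;>
          rw [Finset.sum_pair (by decide)]
        · rw [hM00, hM01]; simpa using hxy1
        · rw [hM10, hM11]; simpa using hxy2
    · -- {0,2} : entries M 0 2 = r1, M 2 0 = r2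
      obtain ⟨x, y, hx, hy, hxy1, hxy2⟩ := pairS r1 r2 (by linarith)
      refine ⟨![x, 1, y], ?_, ?_⟩
      · intro i hi; fin_cases hi <;> simpa using by assumption
      · intro i hi
        fin_cases hi <;>
          rw [Finset.sum_pair (by decide)]
        · rw [hM00, hM02]; simpa using hxy1
        · rw [hM20, hM22]; simpa using hxy2
    · -- {1,2} : M 1 2 = r2, M 2 1 = r1
      obtain ⟨x, y, hx, hy, hxy1, hxy2⟩ := pairS r2 r1 (by linarith)
      refine ⟨![1, x, y], ?_, ?_⟩
      · intro i hi; fin_cases hi <;> simpa using by assumption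
      · intro i hi
        fin_cases hi <;>
          rw [Finset.sum_pair (by decide)]
        · rw [hM11, hM12]; simpa using hxy1
        · rw [hM21, hM22]; simpa using hxy2
    · refine ⟨fun _ => 1, fun i _ => one_pos, ?_⟩
      intro i hi
      have : ({0,1,2} : Finset (Fin 3)) = Finset.univ := by decide
      rw [this, Fin.sum_univ_three]
      fin_cases hi <;> simp [hM] <;> linarith
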